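/- Let γ ∈ (0,1), d ≥ 2, ρ = |v₁⟩⟨v₁| a pure state, and Δ_ρ = I − ρ. Define χ₁* = ((1+√(1−γ))/2)ρ + ((1−√(1−γ))/2)Δ_ρ/(d−1) and χ₂* = ((1−√(1−γ))/2)ρ + ((1+√(1−γ))/2)Δ_ρ/(d−1). Then χ₁* and χ₂* are density matrices, F(χ₁*, χ₂*) = γ, and tr(ρχ₁*) − tr(ρχ₂*) = √(1−γ). -/

import Mathlib

open ComplexOrder Matrix

namespace Matrix.PosSemidef

/-- The positive semidefinite square root of a positive semidefinite matrix
(the definition removed from Mathlib, restored verbatim). -/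
noncomputable def sqrt {n : Type*} [Fintype n] [DecidableEq n] {𝕜 : Type*} [RCLike 𝕜]
    {A : Matrix n n 𝕜} (hA : A.PosSemidef) : Matrix n n 𝕜 :=
  hA.1.eigenvectorUnitary.1 * Matrix.diagonal ((↑) ∘ (√·) ∘ hA.1.eigenvalues) *
  (star hA.1.eigenvectorUnitary : Matrix n n 𝕜)

end Matrix.PosSemidef

private lemma psd_smul {n : ℕ} {P : Matrix (Fin n) (Fin n) ℂ} (hP : P.PosSemidef)
    {r : ℝ} (hr : 0 ≤ r) : ((r : ℂ) • P).PosSemidef := by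
  exact hP.smul (Complex.zero_le_real.mpr hr)

private lemma combo_mul {n : ℕ} {ρ : Matrix (Fin n) (Fin n) ℂ} (hρ2 : ρ * ρ = ρ)
    (p q p' q' : ℂ) :
    (p • ρ + q • (1 - ρ)) * (p' • ρ + q' • (1 - ρ))
      = (p * p') • ρ + (q * q') • (1 - ρ) := by
  have h1 : ρ * (1 - ρ) = 0 := by rw [mul_sub, mul_one, hρ2, sub_self]
  have h2 : (1 - ρ) * ρ = 0 := by rw [sub_mul, one_mul, hρ2, sub_self]
  have h3 : (1 - ρ) * (1 - ρ) = 1 - ρ := by simp [sub_mul, mul_sub, hρ2]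
  simp only [add_mul, mul_add, Matrix.smul_mul, Matrix.mul_smul, h1, h2, h3, hρ2,
    smul_zero, add_zero, zero_add, smul_smul]
  rw [mul_comm p' p, mul_comm q' q]

private lemma combo_psd {n : ℕ} {ρ : Matrix (Fin n) (Fin n) ℂ}
    (hρH : ρ.IsHermitian) (hρ2 : ρ * ρ = ρ)
    {p q : ℝ} (hp : 0 ≤ p) (hq : 0 ≤ q) :
    ((p : ℂ) • ρ + (q : ℂ) • (1 - ρ)).PosSemidef := by
  have hρpsd : ρ.PosSemidef := by
    have : ρ = ρᴴ * ρ := by rw [hρH.eq, hρ2]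
    rw [this]; exact Matrix.posSemidef_conjTranspose_mul_self _
  have h1ρ : (1 - ρ).PosSemidef := by
    have hH : (1 - ρ).IsHermitian := by
      unfold Matrix.IsHermitian
      rw [Matrix.conjTranspose_sub, Matrix.conjTranspose_one, hρH.eq]
    have h3 : (1 - ρ) * (1 - ρ) = 1 - ρ := by simp [sub_mul, mul_sub, hρ2]
    have : (1 - ρ) = (1 - ρ)ᴴ * (1 - ρ) := by rw [hH.eq, h3]
    rw [this]; exact Matrix.posSemidef_conjTranspose_mul_self _
  exact (psd_smul hρpsd hp).add (psd_smul h1ρ hq)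

private lemma combo_vec {n : ℕ} {ρ : Matrix (Fin n) (Fin n) ℂ} (hρ2 : ρ * ρ = ρ)
    {α β l : ℝ} (v : Fin n → ℂ)
    (hv : ((α : ℂ) • ρ + (β : ℂ) • (1 - ρ)) *ᵥ v = (l : ℂ) • v) :
    ((Real.sqrt α : ℂ) • ρ + (Real.sqrt β : ℂ) • (1 - ρ)) *ᵥ v = (Real.sqrt l : ℂ) • v := by
  have hexp : ∀ p q : ℂ, (p • ρ + q • (1 - ρ)) *ᵥ v = p • (ρ *ᵥ v) + q • (v - ρ *ᵥ v) := by
    intro p q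
    rw [Matrix.add_mulVec, Matrix.smul_mulVec, Matrix.smul_mulVec,
      Matrix.sub_mulVec, Matrix.one_mulVec]
  have hρx : ρ *ᵥ (ρ *ᵥ v) = ρ *ᵥ v := by rw [Matrix.mulVec_mulVec, hρ2]
  have hρy : ρ *ᵥ (v - ρ *ᵥ v) = 0 := by rw [Matrix.mulVec_sub, hρx, sub_self]
  rw [hexp] at hv ⊢
  have hsplit : v = ρ *ᵥ v + (v - ρ *ᵥ v) := by abel
  have hx : (α : ℂ) • (ρ *ᵥ v) = (l : ℂ) • (ρ *ᵥ v) := by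
    have := congrArg (fun w => ρ *ᵥ w) hv
    simpa only [Matrix.mulVec_add, Matrix.mulVec_smul, hρx, hρy, smul_zero, add_zero] using this
  have hy : (β : ℂ) • (v - ρ *ᵥ v) = (l : ℂ) • (v - ρ *ᵥ v) := by
    have h2 : (l:ℂ) • v = (l:ℂ) • (ρ *ᵥ v) + (l:ℂ) • (v - ρ *ᵥ v) := by
      rw [← smul_add, ← hsplit]
    rw [h2, hx] at hv
    exact add_left_cancel hv
  have key : ∀ (p : ℝ) (w : Fin n → ℂ), (p : ℂ) • w = (l : ℂ) • w →
      (Real.sqrt p : ℂ) • w = (Real.sqrt l : ℂ) • w := by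
    intro p w h
    rw [← sub_eq_zero, ← sub_smul, smul_eq_zero, sub_eq_zero, Complex.ofReal_inj] at h
    rcases h with h | h
    · rw [h]
    · rw [h, smul_zero, smul_zero]
  rw [key α _ hx, key β _ hy, ← smul_add, ← hsplit]

private lemma combo_sqrt {n : ℕ} {ρ : Matrix (Fin n) (Fin n) ℂ}
    (hρ2 : ρ * ρ = ρ) {α β : ℝ} {M : Matrix (Fin n) (Fin n) ℂ} (hM : M.PosSemidef)
    (hMe : M = (α : ℂ) • ρ + (β : ℂ) • (1 - ρ)) :
    hM.sqrt = (Real.sqrt α : ℂ) • ρ + (Real.sqrt β : ℂ) • (1 - ρ) := by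
  subst hMe
  have hTU : ((Real.sqrt α : ℂ) • ρ + (Real.sqrt β : ℂ) • (1 - ρ))
      * (hM.1.eigenvectorUnitary : Matrix (Fin n) (Fin n) ℂ)
      = (hM.1.eigenvectorUnitary : Matrix (Fin n) (Fin n) ℂ)
        * Matrix.diagonal ((RCLike.ofReal : ℝ → ℂ) ∘ (√·) ∘ hM.1.eigenvalues) := by
    apply Matrix.ext_of_mulVec_single
    intro j
    rw [← Matrix.mulVec_mulVec, ← Matrix.mulVec_mulVec,
      Matrix.IsHermitian.eigenvectorUnitary_mulVec, Matrix.diagonal_mulVec_single, mul_one]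
    have hs : ∀ x : ℂ, (Pi.single j x : Fin n → ℂ) = x • Pi.single j 1 := by
      intro x; ext i; by_cases h : i = j <;> simp [Pi.single_apply, h]
    rw [hs, Matrix.mulVec_smul, Matrix.IsHermitian.eigenvectorUnitary_mulVec]
    exact combo_vec hρ2 _
      (by rw [hM.1.mulVec_eigenvectorBasis j, RCLike.real_smul_eq_coe_smul (K := ℂ)]; rfl)
  unfold Matrix.PosSemidef.sqrt
  rw [← hTU, mul_assoc, Unitary.mul_star_self_of_mem hM.1.eigenvectorUnitary.2, mul_one]

theorem stmt_4 (d : ℕ) (hd : 2 ≤ d) (γ : ℝ) (hγ : γ ∈ Set.Ioo (0:ℝ) 1)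
    (ρ : Matrix (Fin d) (Fin d) ℂ)
    (hρH : ρ.IsHermitian) (hρ2 : ρ * ρ = ρ) (hρtr : ρ.trace = 1)
    (χ₁ χ₂ : Matrix (Fin d) (Fin d) ℂ)
    (hχ₁ : χ₁ = (((1 + Real.sqrt (1-γ))/2 : ℝ) : ℂ) • ρ
        + ((((1 - Real.sqrt (1-γ))/2) / ((d:ℝ) - 1) : ℝ) : ℂ) • (1 - ρ))
    (hχ₂ : χ₂ = (((1 - Real.sqrt (1-γ))/2 : ℝ) : ℂ) • ρ
        + ((((1 + Real.sqrt (1-γ))/2) / ((d:ℝ) - 1) : ℝ) : ℂ) • (1 - ρ)) :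
    (χ₁.PosSemidef ∧ χ₁.trace = 1) ∧ (χ₂.PosSemidef ∧ χ₂.trace = 1) ∧
    (∀ (h1 : χ₁.PosSemidef) (hmid : (h1.sqrt * χ₂ * h1.sqrt).PosSemidef),
      (hmid.sqrt.trace)^2 = (γ : ℂ)) ∧
    (ρ * χ₁).trace - (ρ * χ₂).trace = ((Real.sqrt (1 - γ) : ℝ) : ℂ) := by
  obtain ⟨hγ0, hγ1⟩ := hγ
  set s : ℝ := Real.sqrt (1 - γ) with hs
  have h1γ0 : (0:ℝ) ≤ 1 - γ := by linarith
  have hs0 : 0 ≤ s := Real.sqrt_nonneg _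
  have hss : s * s = 1 - γ := Real.mul_self_sqrt h1γ0
  have hs1 : s < 1 := by
    nlinarith [hss]
  have hdr : (1:ℝ) ≤ (d:ℝ) - 1 := by
    have : (2:ℝ) ≤ (d:ℝ) := by exact_mod_cast hd
    linarith
  have hdne : (d:ℝ) - 1 ≠ 0 := by linarith
  set a : ℝ := (1 + s)/2 with ha
  set b : ℝ := (1 - s)/2 with hb
  have ha0 : 0 ≤ a := by rw [ha]; linarith
  have hb0 : 0 ≤ b := by rw [hb]; linarith
  set c : ℝ := b / ((d:ℝ) - 1) with hc
  set c' : ℝ := a / ((d:ℝ) - 1) with hc'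
  have hc0 : 0 ≤ c := div_nonneg hb0 (by linarith)
  have hc'0 : 0 ≤ c' := div_nonneg ha0 (by linarith)
  -- traces of combos
  have htr1 : (1 : Matrix (Fin d) (Fin d) ℂ).trace = (d : ℂ) := by
    simp [Matrix.trace_one]
  have htrcombo : ∀ p q : ℝ, ((p:ℂ) • ρ + (q:ℂ) • (1 - ρ)).trace
      = ((p + q * ((d:ℝ) - 1) : ℝ) : ℂ) := by
    intro p q
    rw [Matrix.trace_add, Matrix.trace_smul, Matrix.trace_smul, Matrix.trace_sub,
      htr1, hρtr]
    push_cast [smul_eq_mul]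
    ring
  have hχ₁' : χ₁ = (a:ℂ) • ρ + (c:ℂ) • (1 - ρ) := hχ₁
  have hχ₂' : χ₂ = (b:ℂ) • ρ + (c':ℂ) • (1 - ρ) := hχ₂
  have hχ₁psd : χ₁.PosSemidef := by rw [hχ₁']; exact combo_psd hρH hρ2 ha0 hc0
  have hχ₂psd : χ₂.PosSemidef := by rw [hχ₂']; exact combo_psd hρH hρ2 hb0 hc'0
  have hχ₁tr : χ₁.trace = 1 := by
    rw [hχ₁', htrcombo]
    have : a + c * ((d:ℝ) - 1) = 1 := by
      rw [hc, div_mul_cancel₀ _ hdne, ha, hb]; ring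
    rw [this]; norm_num
  have hχ₂tr : χ₂.trace = 1 := by
    rw [hχ₂', htrcombo]
    have : b + c' * ((d:ℝ) - 1) = 1 := by
      rw [hc', div_mul_cancel₀ _ hdne, ha, hb]; ring
    rw [this]; norm_num
  refine ⟨⟨hχ₁psd, hχ₁tr⟩, ⟨hχ₂psd, hχ₂tr⟩, ?_, ?_⟩
  · intro h1 hmid
    -- sqrt of χ₁
    set S : Matrix (Fin d) (Fin d) ℂ :=
      (Real.sqrt a : ℂ) • ρ + (Real.sqrt c : ℂ) • (1 - ρ) with hS
    have hSpsd : S.PosSemidef := combo_psd hρH hρ2 (Real.sqrt_nonneg _) (Real.sqrt_nonneg _)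
    have hSsq : S ^ 2 = χ₁ := by
      rw [pow_two, hS, combo_mul hρ2, hχ₁']
      norm_cast
      rw [Real.mul_self_sqrt ha0, Real.mul_self_sqrt hc0]
    have hSeq : S = h1.sqrt := (combo_sqrt hρ2 h1 hχ₁').symm
    have e1c : ((Real.sqrt a : ℂ) * (b:ℂ)) * (Real.sqrt a : ℂ) = ((a*b : ℝ) : ℂ) := by
      push_cast
      rw [mul_right_comm]
      norm_cast
      rw [Real.mul_self_sqrt ha0]
    have e2c : ((Real.sqrt c : ℂ) * (c':ℂ)) * (Real.sqrt c : ℂ) = ((c*c' : ℝ) : ℂ) := by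
      push_cast
      rw [mul_right_comm]
      norm_cast
      rw [Real.mul_self_sqrt hc0]
    have hmid_eq : h1.sqrt * χ₂ * h1.sqrt
        = ((a * b : ℝ) : ℂ) • ρ + ((c * c' : ℝ) : ℂ) • (1 - ρ) := by
      rw [← hSeq, hS, hχ₂', combo_mul hρ2, combo_mul hρ2, e1c, e2c]
    set T : Matrix (Fin d) (Fin d) ℂ :=
      (Real.sqrt (a*b) : ℂ) • ρ + (Real.sqrt (c*c') : ℂ) • (1 - ρ) with hT
    have hTpsd : T.PosSemidef := combo_psd hρH hρ2 (Real.sqrt_nonneg _) (Real.sqrt_nonneg _)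
    have hTsq : T ^ 2 = h1.sqrt * χ₂ * h1.sqrt := by
      rw [pow_two, hT, combo_mul hρ2, hmid_eq]
      norm_cast
      rw [Real.mul_self_sqrt (mul_nonneg ha0 hb0), Real.mul_self_sqrt (mul_nonneg hc0 hc'0)]
    have hTeq : T = hmid.sqrt := (combo_sqrt hρ2 hmid hmid_eq).symm
    have hab : a * b = γ / 4 := by rw [ha, hb]; nlinarith [hss]
    have hcc' : c * c' = (γ / 4) / (((d:ℝ) - 1) * ((d:ℝ) - 1)) := by
      rw [hc, hc', div_mul_div_comm, mul_comm b a, hab]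
    have h4 : Real.sqrt 4 = 2 := by
      rw [show (4:ℝ) = 2^2 by norm_num, Real.sqrt_sq (by norm_num)]
    have hsab : Real.sqrt (a * b) = Real.sqrt γ / 2 := by
      rw [hab, Real.sqrt_div (le_of_lt hγ0), h4]
    have hscc : Real.sqrt (c * c') = (Real.sqrt γ / 2) / ((d:ℝ) - 1) := by
      rw [hcc', Real.sqrt_div (by positivity), Real.sqrt_mul_self (by linarith),
        Real.sqrt_div (le_of_lt hγ0), h4]
    have htrT : T.trace = ((Real.sqrt γ : ℝ) : ℂ) := by
      rw [hT, htrcombo]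
      have : Real.sqrt (a*b) + Real.sqrt (c*c') * ((d:ℝ) - 1) = Real.sqrt γ := by
        rw [hsab, hscc, div_mul_cancel₀ _ hdne]; ring
      rw [this]
    rw [← hTeq, htrT]
    norm_cast
    rw [Real.sq_sqrt (le_of_lt hγ0)]
  · have hmul : ∀ p q : ℝ, ρ * ((p:ℂ) • ρ + (q:ℂ) • (1 - ρ)) = (p:ℂ) • ρ := by
      intro p q
      have h1 : ρ * (1 - ρ) = 0 := by rw [mul_sub, mul_one, hρ2, sub_self]
      rw [mul_add, Matrix.mul_smul, Matrix.mul_smul, hρ2, h1, smul_zero, add_zero]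
    rw [hχ₁', hχ₂', hmul, hmul, Matrix.trace_smul, Matrix.trace_smul, hρtr,
      smul_eq_mul, smul_eq_mul, mul_one, mul_one]
    rw [← Complex.ofReal_sub]
    congr 1
    rw [ha, hb]; ring
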